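/- (Correctness of the near-exact oracle, case 2) Suppose the shortest s-t path P contains some vertex v ∉ V_r with r = (ε/2)d + W, d = d(s,t), and suppose d(v,p(v)) ≤ r where p(v) is the pivot nearest to v. Then d(s,t) ≤ d(s,p(v)) + d(p(v),t) ≤ (1+ε)·d(s,t) + 2W. -/
import Mathlib


/-- Correctness of the near-exact oracle, case 2: Suppose
`v` lies on a shortest `s`-`t` path (so `d(s,v) + d(v,t) = d(s,t)`) and
its nearest pivot `p` satisfies `d(v,p) ≤ r` with `r = (ε/2)·d(s,t) + W`
(which holds w.h.p. for `v ∉ V_r`). Then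
`d(s,t) ≤ d(s,p) + d(p,t) ≤ (1+ε)·d(s,t) + 2W`. -/
theorem stmt_14 {V : Type*} (d : V → V → ℝ)
    (hsymm : ∀ a b, d a b = d b a)
    (htri : ∀ a b c, d a c ≤ d a b + d b c)
    (s t v p : V) (ε W r : ℝ)
    (hr : r = (ε / 2) * d s t + W)
    (hpath : d s v + d v t = d s t)
    (hvp : d v p ≤ r) :
    d s t ≤ d s p + d p t ∧ d s p + d p t ≤ (1 + ε) * d s t + 2 * W := by
  constructor
  · exact hpath ▸ htri s p t
  · have h1 : d s p ≤ d s v + d v p := htri s v p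
    have h2 : d p t ≤ d p v + d v t := htri p v t
    have h3 : d p v = d v p := hsymm p v
    nlinarith [htri s v p, htri p v t]
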